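/- Let n ≥ 2, let x_0 ∈ ℝ^n with ∑_{i=1}^n x_{0,i} = 0, and let τ = 1 − 1/(n−1). For the repeated averaging chain with S(k) = ∑_{i=1}^n x_{k,i}², the expectation of S(k) under μ_n equals τ^k S(0) for every k ≥ 0. Equivalently, averaging ∑_{l=1}^n (A_{ω_{k−1}} ⋯ A_{ω_0} x_0)_l² over all C(n,2)^k finite sequences (ω_0, …, ω_{k−1}) of unordered pairs gives τ^k ∑_{i=1}^n x_{0,i}². -/

import Mathlib

open MeasureTheory Finset Filter
open scoped ENNReal NNReal

/-- The set of unordered pairs of distinct indices in `Fin n`, encoded as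
2-element subsets of `Fin n`. -/
abbrev Pairs (n : ℕ) : Type := {s : Finset (Fin n) // s.card = 2}

instance (n : ℕ) : MeasurableSpace (Pairs n) := ⊤

/-- The uniform probability measure on the set of pairs. -/
noncomputable def uniformPair (n : ℕ) : Measure (Pairs n) :=
  (Fintype.card (Pairs n) : ℝ≥0∞)⁻¹ • Measure.count

/-- `μ` is the infinite product over `ℕ` of the uniform measure on pairs:
its finite-dimensional marginals are the finite uniform product measures.
(This characterizes the infinite product measure uniquely.) -/
def IsProductLaw (n : ℕ) (μ : Measure (ℕ → Pairs n)) : Prop :=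
  ∀ K : ℕ, μ.map (fun ω (i : Fin K) => ω i) = Measure.pi fun _ : Fin K => uniformPair n

/-- The pair-averaging operation: both coordinates in `s` (a 2-element set `{i,j}`)
are replaced by `(x i + x j)/2`; the other coordinates are unchanged. -/
noncomputable def avgStep {n : ℕ} (s : Finset (Fin n)) (x : Fin n → ℝ) : Fin n → ℝ :=
  fun l => if l ∈ s then (∑ m ∈ s, x m) / 2 else x l

/-- The repeated averaging chain started at `x0`, driven by the pair sequence `ω`. -/
noncomputable def chain {n : ℕ} (x0 : Fin n → ℝ) (ω : ℕ → Pairs n) : ℕ → Fin n → ℝ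
  | 0 => x0
  | k + 1 => avgStep (ω k).1 (chain x0 ω k)

/-- `T(k) = ∑_i |x_{k,i} - 1/n|`. -/
noncomputable def Tdist {n : ℕ} (x0 : Fin n → ℝ) (ω : ℕ → Pairs n) (k : ℕ) : ℝ :=
  ∑ i, |chain x0 ω k i - 1 / n|

/-- The initial vector `(1,0,…,0)`. -/
def e1 (n : ℕ) : Fin n → ℝ := fun i => if i.val = 0 then 1 else 0

/-- The standard normal cumulative distribution function. -/
noncomputable def stdGaussianCDF (x : ℝ) : ℝ :=
  ∫ t in Set.Iic x, (2 * Real.pi) ^ (-(1:ℝ)/2) * Real.exp (-t ^ 2 / 2)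

/-- The repeated averaging process driven by a finite list of pairs (head applied first). -/
noncomputable def chainList {n : ℕ} (x0 : Fin n → ℝ) : List (Pairs n) → Fin n → ℝ
  | [] => x0
  | p :: l => chainList (avgStep p.1 x0) l

section Aux

variable {n : ℕ}

instance : MeasurableSingletonClass (Pairs n) :=
  ⟨fun _ => MeasurableSpace.measurableSet_top⟩

instance (k : ℕ) : MeasurableSingletonClass (Fin k → Pairs n) :=
  ⟨fun f => by
    rw [← Set.univ_pi_singleton]
    exact MeasurableSet.univ_pi fun i => measurableSet_singleton _⟩

lemma filter_pair_mem (i j : Fin n) (hij : i ≠ j) :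
    (Finset.univ.powersetCard 2).filter (fun s => i ∈ s ∧ j ∈ s)
      = {({i, j} : Finset (Fin n))} := by
  ext s
  simp only [Finset.mem_filter, Finset.mem_powersetCard_univ, Finset.mem_singleton]
  constructor
  · rintro ⟨hc, hi, hj⟩
    refine (Finset.eq_of_subset_of_card_le ?_ ?_).symm
    · exact Finset.insert_subset hi (Finset.singleton_subset_iff.2 hj)
    · rw [hc, Finset.card_pair hij]
  · rintro rfl
    exact ⟨Finset.card_pair hij, Finset.mem_insert_self _ _,
      Finset.mem_insert_of_mem (Finset.mem_singleton_self _)⟩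

lemma sum_pairs_offdiag (g : Fin n → Fin n → ℝ) :
    ∑ s ∈ Finset.univ.powersetCard 2, ∑ m ∈ s, ∑ m' ∈ s.erase m, g m m'
      = ∑ m, ∑ m' ∈ Finset.univ.erase m, g m m' := by
  classical
  have h1 : ∀ s ∈ (Finset.univ : Finset (Fin n)).powersetCard 2,
      ∑ m ∈ s, ∑ m' ∈ s.erase m, g m m'
        = ∑ m, ∑ m' ∈ Finset.univ.erase m,
            if m ∈ s ∧ m' ∈ s then g m m' else 0 := by
    intro s _
    have e2 : Finset.univ.filter (· ∈ s) = s := by ext y; simp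
    symm
    calc ∑ m, ∑ m' ∈ Finset.univ.erase m, (if m ∈ s ∧ m' ∈ s then g m m' else 0)
        = ∑ m, if m ∈ s then ∑ m' ∈ s.erase m, g m m' else 0 := by
          refine Finset.sum_congr rfl fun m _ => ?_
          by_cases hm : m ∈ s
          · have e1 : (Finset.univ.erase m).filter (· ∈ s) = s.erase m := by
              ext y; simp [Finset.mem_erase, and_comm]
            simp only [hm, true_and, if_true]
            rw [← Finset.sum_filter, e1]
          · simp [hm]
      _ = ∑ m ∈ s, ∑ m' ∈ s.erase m, g m m' := by
          rw [← Finset.sum_filter, e2]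
  rw [Finset.sum_congr rfl h1, Finset.sum_comm]
  refine Finset.sum_congr rfl fun m _ => ?_
  rw [Finset.sum_comm]
  refine Finset.sum_congr rfl fun m' hm' => ?_
  have hne : m ≠ m' := fun h => ((Finset.mem_erase.1 hm').1 h.symm).elim
  rw [← Finset.sum_filter, filter_pair_mem m m' hne, Finset.sum_singleton]

lemma sum_avgStep (s : Finset (Fin n)) (hs : s.card = 2) (x : Fin n → ℝ) :
    ∑ l, avgStep s x l = ∑ l, x l := by
  classical
  rw [← Finset.sum_add_sum_compl s (avgStep s x), ← Finset.sum_add_sum_compl s x]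
  congr 1
  · have : ∀ l ∈ s, avgStep s x l = (∑ m ∈ s, x m) / 2 := fun l hl => if_pos hl
    rw [Finset.sum_congr rfl this, Finset.sum_const, hs]
    ring
  · refine Finset.sum_congr rfl fun l hl => ?_
    exact if_neg (Finset.mem_compl.1 hl)

lemma sum_sq_avgStep (s : Finset (Fin n)) (hs : s.card = 2) (x : Fin n → ℝ) :
    ∑ l, (avgStep s x l) ^ 2
      = ∑ l, x l ^ 2 - ∑ m ∈ s, ∑ m' ∈ s.erase m, (x m - x m') ^ 2 / 4 := by
  classical
  obtain ⟨i, j, hij, rfl⟩ := Finset.card_eq_two.1 hs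
  have hei : ({i, j} : Finset (Fin n)).erase i = {j} := by
    rw [Finset.erase_insert (by simp [hij])]
  have hej : ({i, j} : Finset (Fin n)).erase j = {i} := by
    ext y; simp [Finset.mem_erase, Finset.mem_insert, hij]
    constructor
    · rintro ⟨hy, (rfl | rfl)⟩ <;> tauto
    · rintro rfl; exact ⟨hij, Or.inl rfl⟩
  rw [← Finset.sum_add_sum_compl ({i,j} : Finset (Fin n)) (fun l => (avgStep {i,j} x l)^2),
      ← Finset.sum_add_sum_compl ({i,j} : Finset (Fin n)) (fun l => x l ^ 2)]
  have h1 : ∀ l ∈ ({i,j} : Finset (Fin n)), (avgStep {i,j} x l)^2 = ((x i + x j)/2)^2 := by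
    intro l hl
    simp only [avgStep, if_pos hl, Finset.sum_pair hij]
  have h2 : ∀ l ∈ ({i,j} : Finset (Fin n))ᶜ, (avgStep {i,j} x l)^2 = x l ^ 2 := by
    intro l hl
    simp only [avgStep, if_neg (Finset.mem_compl.1 hl)]
  rw [Finset.sum_congr rfl h1, Finset.sum_congr rfl h2, Finset.sum_const, Finset.card_pair hij,
      Finset.sum_pair hij, Finset.sum_pair hij, hei, hej,
      Finset.sum_singleton, Finset.sum_singleton]
  ring

lemma step_sum (x : Fin n → ℝ) (hx : ∑ i, x i = 0) :
    ∑ p : Pairs n, ∑ l, (avgStep p.1 x l) ^ 2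
      = ((n : ℝ) * ((n : ℝ) - 2) / 2) * ∑ l, x l ^ 2 := by
  classical
  have hsub : ∑ p : Pairs n, ∑ l, (avgStep p.1 x l) ^ 2
      = ∑ s ∈ Finset.univ.powersetCard 2, ∑ l, (avgStep s x l) ^ 2 := by
    rw [Finset.sum_subtype (Finset.univ.powersetCard 2)
      (fun s => Finset.mem_powersetCard_univ) (fun s => ∑ l, (avgStep s x l) ^ 2)]
  rw [hsub]
  have h1 : ∀ s ∈ (Finset.univ : Finset (Fin n)).powersetCard 2,
      ∑ l, (avgStep s x l) ^ 2
        = ∑ l, x l ^ 2 - ∑ m ∈ s, ∑ m' ∈ s.erase m, (x m - x m') ^ 2 / 4 := fun s hs =>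
    sum_sq_avgStep s (Finset.mem_powersetCard_univ.1 hs) x
  rw [Finset.sum_congr rfl h1, Finset.sum_sub_distrib, Finset.sum_const,
      sum_pairs_offdiag, Finset.card_powersetCard, Finset.card_univ, Fintype.card_fin]
  have inner : ∀ m : Fin n, ∑ m' ∈ Finset.univ.erase m, (x m - x m') ^ 2 / 4
      = (n : ℝ) * x m ^ 2 / 4 + (∑ l, x l ^ 2) / 4 - x m / 2 * ∑ l, x l := by
    intro m
    have he := Finset.sum_erase_add Finset.univ (fun m' => (x m - x m') ^ 2 / 4)
      (Finset.mem_univ m)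
    have hz : (x m - x m) ^ 2 / 4 = 0 := by ring
    have he2 : ∑ m' ∈ Finset.univ.erase m, (x m - x m') ^ 2 / 4
        = ∑ m' : Fin n, (x m - x m') ^ 2 / 4 := by
      rw [← he]; simp [hz]
    rw [he2,
      Finset.sum_congr rfl (fun m' (_ : m' ∈ Finset.univ) =>
        (by ring : (x m - x m') ^ 2 / 4 = x m ^ 2 / 4 + x m' ^ 2 / 4 - x m / 2 * x m')),
      Finset.sum_sub_distrib, Finset.sum_add_distrib, Finset.sum_const, ← Finset.sum_div,
      ← Finset.mul_sum, Finset.card_univ, Fintype.card_fin, nsmul_eq_mul]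
    ring
  have key : ∑ m, ∑ m' ∈ Finset.univ.erase m, (x m - x m') ^ 2 / 4
      = (n : ℝ) * (∑ l, x l ^ 2) / 2 := by
    rw [Finset.sum_congr rfl (fun m (_ : m ∈ Finset.univ) => by
      rw [inner m, hx, mul_zero] :
      ∀ m ∈ Finset.univ, ∑ m' ∈ Finset.univ.erase m, (x m - x m') ^ 2 / 4
        = (n : ℝ) * x m ^ 2 / 4 + (∑ l, x l ^ 2) / 4 - 0)]
    rw [Finset.sum_congr rfl (fun m (_ : m ∈ Finset.univ) =>
      (by ring : (n : ℝ) * x m ^ 2 / 4 + (∑ l, x l ^ 2) / 4 - 0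
        = (n : ℝ) / 4 * x m ^ 2 + (∑ l, x l ^ 2) / 4)),
      Finset.sum_add_distrib, Finset.sum_const, ← Finset.mul_sum, Finset.card_univ,
      Fintype.card_fin, nsmul_eq_mul]
    ring
  rw [key, nsmul_eq_mul, Nat.cast_choose_two]
  ring

lemma chainList_append (x : Fin n → ℝ) (l1 l2 : List (Pairs n)) :
    chainList x (l1 ++ l2) = chainList (chainList x l1) l2 := by
  induction l1 generalizing x with
  | nil => rfl
  | cons p l ih => simp [chainList, ih]

lemma chain_eq_chainList (x0 : Fin n → ℝ) (ω : ℕ → Pairs n) (k : ℕ) :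
    chain x0 ω k = chainList x0 (List.ofFn fun i : Fin k => ω i) := by
  induction k with
  | zero => rfl
  | succ k ih =>
    rw [List.ofFn_succ', List.concat_eq_append, chainList_append]
    show avgStep (ω k).1 (chain x0 ω k) = _
    rw [ih]
    rfl

lemma sum_chainList_sq (k : ℕ) :
    ∀ x : Fin n → ℝ, ∑ i, x i = 0 →
    ∑ σ : Fin k → Pairs n, ∑ l, (chainList x (List.ofFn σ) l) ^ 2
      = ((n : ℝ) * ((n : ℝ) - 2) / 2) ^ k * ∑ i, x i ^ 2 := by
  induction k with
  | zero =>
    intro x hx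
    rw [Fintype.sum_unique (fun σ : Fin 0 → Pairs n => ∑ l, (chainList x (List.ofFn σ) l) ^ 2)]
    simp [chainList]
  | succ k ih =>
    intro x hx
    have he := Fintype.sum_equiv (Fin.consEquiv (fun _ : Fin (k+1) => Pairs n))
      (fun q : Pairs n × (Fin k → Pairs n) =>
        ∑ l, (chainList x (List.ofFn ((Fin.consEquiv (fun _ : Fin (k+1) => Pairs n)) q)) l) ^ 2)
      (fun σ : Fin (k+1) → Pairs n => ∑ l, (chainList x (List.ofFn σ) l) ^ 2)
      (fun q => rfl)
    rw [← he, Fintype.sum_prod_type]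
    have hofn : ∀ (p : Pairs n) (σ' : Fin k → Pairs n),
        List.ofFn ((Fin.consEquiv (fun _ : Fin (k+1) => Pairs n)) (p, σ'))
          = p :: List.ofFn σ' := by
      intro p σ'
      simp [List.ofFn_succ, Fin.consEquiv]
    have hstep : ∀ p : Pairs n,
        ∑ σ' : Fin k → Pairs n, ∑ l, (chainList x
          (List.ofFn ((Fin.consEquiv (fun _ : Fin (k+1) => Pairs n)) (p, σ'))) l) ^ 2
        = ((n : ℝ) * ((n : ℝ) - 2) / 2) ^ k * ∑ l, (avgStep p.1 x l) ^ 2 := by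
      intro p
      have hsum0 : ∑ i, avgStep p.1 x i = 0 := by rw [sum_avgStep p.1 p.2 x, hx]
      rw [Finset.sum_congr rfl fun σ' _ => by rw [hofn p σ']]
      exact ih (avgStep p.1 x) hsum0
    rw [Finset.sum_congr rfl fun p _ => hstep p, ← Finset.mul_sum, step_sum x hx]
    ring

lemma card_pairs (n : ℕ) : Fintype.card (Pairs n) = n.choose 2 := by
  simpa using Fintype.card_finset_len (α := Fin n) 2

end Aux

/-- **Corollary (decay of expected `L²` distance).** If `∑ x₀ᵢ = 0` and
`τ = 1 - 1/(n-1)`, then `E(S(k)) = τ^k S(0)`; equivalently, averaging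
`∑ₗ (A_{ω_{k-1}} ⋯ A_{ω_0} x₀)ₗ²` over all `C(n,2)^k` finite pair sequences gives
`τ^k ∑ᵢ x₀ᵢ²`. -/
theorem expected_L2_decay (n : ℕ) (hn : 2 ≤ n)
    (μ : Measure (ℕ → Pairs n)) (hμ : IsProductLaw n μ)
    (x0 : Fin n → ℝ) (hx0 : ∑ i, x0 i = 0) (k : ℕ) :
    (∫ ω, (∑ i, (chain x0 ω k i) ^ 2) ∂μ
        = (1 - 1 / ((n : ℝ) - 1)) ^ k * ∑ i, (x0 i) ^ 2) ∧
    (∑ σ : Fin k → Pairs n, ∑ l, (chainList x0 (List.ofFn σ) l) ^ 2)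
        / ((n : ℝ) * ((n : ℝ) - 1) / 2) ^ k
      = (1 - 1 / ((n : ℝ) - 1)) ^ k * ∑ i, (x0 i) ^ 2 := by
  classical
  have hn2 : (2 : ℝ) ≤ (n : ℝ) := by exact_mod_cast hn
  have hn1 : (n : ℝ) - 1 ≠ 0 := by linarith
  have hCpos : (0 : ℝ) < (n : ℝ) * ((n : ℝ) - 1) / 2 := by nlinarith
  have hC : (n : ℝ) * ((n : ℝ) - 1) / 2 ≠ 0 := ne_of_gt hCpos
  have htau : (n : ℝ) * ((n : ℝ) - 2) / 2
      = ((n : ℝ) * ((n : ℝ) - 1) / 2) * (1 - 1 / ((n : ℝ) - 1)) := by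
    field_simp
    ring
  have part2 : (∑ σ : Fin k → Pairs n, ∑ l, (chainList x0 (List.ofFn σ) l) ^ 2)
      / ((n : ℝ) * ((n : ℝ) - 1) / 2) ^ k
      = (1 - 1 / ((n : ℝ) - 1)) ^ k * ∑ i, (x0 i) ^ 2 := by
    rw [sum_chainList_sq k x0 hx0, htau, mul_pow, div_eq_iff (pow_ne_zero k hC)]
    ring
  refine ⟨?_, part2⟩
  have hcardeq := card_pairs n
  have hcard0 : (Fintype.card (Pairs n) : ℝ≥0∞) ≠ 0 := by
    have : 0 < Fintype.card (Pairs n) := by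
      rw [hcardeq]; exact Nat.choose_pos hn
    exact_mod_cast this.ne'
  haveI huni : IsProbabilityMeasure (uniformPair n) := ⟨by
    simp only [uniformPair, Measure.smul_apply, Measure.count_univ, smul_eq_mul]
    rw [ENat.card_eq_coe_fintype_card, ENat.toENNReal_coe]
    exact ENNReal.inv_mul_cancel hcard0 (ENNReal.natCast_ne_top _)⟩
  have hproj : Measurable (fun ω : ℕ → Pairs n => fun i : Fin k => ω i) :=
    measurable_pi_lambda _ fun i => measurable_pi_apply _
  set f : (Fin k → Pairs n) → ℝ :=
    fun σ => ∑ l, (chainList x0 (List.ofFn σ) l) ^ 2 with hf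
  have hfm : Measurable f := measurable_of_countable f
  have h1 : ∫ ω, (∑ i, (chain x0 ω k i) ^ 2) ∂μ
      = ∫ ω, f (fun i : Fin k => ω i) ∂μ := by
    refine integral_congr_ae (Filter.Eventually.of_forall fun ω => ?_)
    simp only [hf, chain_eq_chainList]
  have h2 : ∫ ω, f (fun i : Fin k => ω i) ∂μ
      = ∫ σ, f σ ∂(Measure.pi fun _ : Fin k => uniformPair n) := by
    rw [← hμ k, integral_map hproj.aemeasurable hfm.aestronglyMeasurable]
  have h3 : ∫ σ, f σ ∂(Measure.pi fun _ : Fin k => uniformPair n)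
      = ∑ σ : Fin k → Pairs n, ((Fintype.card (Pairs n) : ℝ)⁻¹) ^ k * f σ := by
    rw [integral_fintype (Integrable.of_finite)]
    refine Finset.sum_congr rfl fun σ _ => ?_
    have hs : Measure.pi (fun _ : Fin k => uniformPair n) {σ}
        = ((Fintype.card (Pairs n) : ℝ≥0∞)⁻¹) ^ k := by
      rw [← Set.univ_pi_singleton, Measure.pi_pi]
      have hone : ∀ i : Fin k, uniformPair n {σ i}
          = (Fintype.card (Pairs n) : ℝ≥0∞)⁻¹ := by
        intro i
        simp [uniformPair, Measure.count_singleton]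
      rw [Finset.prod_congr rfl fun i _ => hone i, Finset.prod_const, Finset.card_univ,
        Fintype.card_fin]
    rw [measureReal_def, hs, smul_eq_mul]
    congr 1
    simp [ENNReal.toReal_pow, ENNReal.toReal_inv]
  have hcR : (Fintype.card (Pairs n) : ℝ) = (n : ℝ) * ((n : ℝ) - 1) / 2 := by
    rw [hcardeq]
    exact_mod_cast Nat.cast_choose_two (K := ℝ) n
  rw [h1, h2, h3, ← Finset.mul_sum, hcR, ← part2, mul_comm, inv_pow, ← div_eq_mul_inv]
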